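/- In the game with complete information on one side (player 1 knows (X_{1:t}, Y^2_{1:t}, U^{1:2}_{1:t-1}), player 2 knows (Y^2_{1:t}, U^2_{1:t-1})), for any behavioral strategy g^1 of player 1 there exists a behavioral strategy ḡ^1 that at each time t depends only on (X_t, I^2_t) such that for every strategy g^2 of player 2, the joint distribution of (X_t, U^1_t, U^2_t, I^2_t) at every time t is the same under (g^1, g^2) and (ḡ^1, g^2); consequently J(ḡ^1, g^2) = J(g^1, g^2) for all g^2. -/

import Mathlib

/-- Behavioral strategy of player 1 in the one-sided-information game: at time
`t` it maps the full history `(X_{0:t}, Y^2_{0:t}, U^1_{0:t-1}, U^2_{0:t-1})` to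
a distribution over `U1`. -/
def Strat1 (X U1 U2 Y : Type*) : Type _ :=
  (t : ℕ) → (Fin (t + 1) → X) → (Fin (t + 1) → Y) → (Fin t → U1) →
    (Fin t → U2) → U1 → ℝ

/-- Behavioral strategy of player 2: at time `t` it maps its information
`I^2_t = (Y^2_{0:t}, U^2_{0:t-1})` to a distribution over `U2`. -/
def Strat2 (U2 Y : Type*) : Type _ :=
  (t : ℕ) → (Fin (t + 1) → Y) → (Fin t → U2) → U2 → ℝ

/-- `g1` is a valid behavioral strategy (pointwise nonnegative distributions). -/
def valid1 {X U1 U2 Y : Type*} [Fintype U1] (g1 : Strat1 X U1 U2 Y) : Prop :=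
  ∀ t xs ys u1s u2s, (∀ u, 0 ≤ g1 t xs ys u1s u2s u) ∧
    ∑ u, g1 t xs ys u1s u2s u = 1

/-- `g2` is a valid behavioral strategy. -/
def valid2 {U2 Y : Type*} [Fintype U2] (g2 : Strat2 U2 Y) : Prop :=
  ∀ t ys u2s, (∀ u, 0 ≤ g2 t ys u2s u) ∧ ∑ u, g2 t ys u2s u = 1

/-- State prefix `X_{0:t}` of a trajectory. -/
def xpre {X U1 U2 Y : Type*} {T : ℕ} (ω : Fin T → X × U1 × U2 × Y) (t : Fin T) :
    Fin (t.1 + 1) → X :=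
  fun s => (ω ⟨s.1, lt_of_lt_of_le s.isLt (Nat.succ_le_of_lt t.isLt)⟩).1

/-- Observation prefix `Y^2_{0:t}` of a trajectory. -/
def ypre {X U1 U2 Y : Type*} {T : ℕ} (ω : Fin T → X × U1 × U2 × Y) (t : Fin T) :
    Fin (t.1 + 1) → Y :=
  fun s => (ω ⟨s.1, lt_of_lt_of_le s.isLt (Nat.succ_le_of_lt t.isLt)⟩).2.2.2

/-- Action prefix `U^1_{0:t-1}` of a trajectory. -/
def u1pre {X U1 U2 Y : Type*} {T : ℕ} (ω : Fin T → X × U1 × U2 × Y) (t : Fin T) :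
    Fin t.1 → U1 :=
  fun s => (ω ⟨s.1, lt_trans s.isLt t.isLt⟩).2.1

/-- Action prefix `U^1_{0:t}` of a trajectory. -/
def u1preInc {X U1 U2 Y : Type*} {T : ℕ} (ω : Fin T → X × U1 × U2 × Y)
    (t : Fin T) : Fin (t.1 + 1) → U1 :=
  fun s => (ω ⟨s.1, lt_of_lt_of_le s.isLt (Nat.succ_le_of_lt t.isLt)⟩).2.1

/-- Action prefix `U^2_{0:t-1}` of a trajectory. -/
def u2pre {X U1 U2 Y : Type*} {T : ℕ} (ω : Fin T → X × U1 × U2 × Y) (t : Fin T) :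
    Fin t.1 → U2 :=
  fun s => (ω ⟨s.1, lt_trans s.isLt t.isLt⟩).2.2.1

/-- Predecessor of a nonzero index. -/
def predIdx {T : ℕ} (t : Fin T) : Fin T :=
  ⟨t.1 - 1, lt_of_le_of_lt (Nat.sub_le _ _) t.isLt⟩

/-- The probability (density) of a length-`T` trajectory
`ω = (X_t, U^1_t, U^2_t, Y^2_t)_{t < T}` under the dynamics
`X_{t+1} ~ trans(X_t, U^1_t, U^2_t)`, `Y^2_{t+1} ~ obs(X_{t+1}, U^1_t, U^2_t)`
(with initial kernels `init`, `inobs`) and the behavioral strategy profile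
`(g1, g2)`. -/
def dens {X U1 U2 Y : Type*} {T : ℕ}
    (init : X → ℝ) (inobs : X → Y → ℝ)
    (trans : X → U1 → U2 → X → ℝ) (obs : X → U1 → U2 → Y → ℝ)
    (g1 : Strat1 X U1 U2 Y) (g2 : Strat2 U2 Y)
    (ω : Fin T → X × U1 × U2 × Y) : ℝ :=
  (∏ t : Fin T,
      if t.1 = 0 then init (ω t).1 * inobs (ω t).1 (ω t).2.2.2
      else
        trans (ω (predIdx t)).1 (ω (predIdx t)).2.1 (ω (predIdx t)).2.2.1
            (ω t).1 *
          obs (ω t).1 (ω (predIdx t)).2.1 (ω (predIdx t)).2.2.1 (ω t).2.2.2) *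
    (∏ t : Fin T,
      g1 t.1 (xpre ω t) (ypre ω t) (u1pre ω t) (u2pre ω t) (ω t).2.1) *
    ∏ t : Fin T, g2 t.1 (ypre ω t) (u2pre ω t) (ω t).2.2.1

/-- Embed a strategy that depends only on `(X_t, I^2_t)` into a full-information
strategy of player 1. -/
def embed1 {X U1 U2 Y : Type*}
    (g : (t : ℕ) → X → (Fin (t + 1) → Y) → (Fin t → U2) → U1 → ℝ) :
    Strat1 X U1 U2 Y :=
  fun t xs ys _ u2s => g t (xs (Fin.last t)) ys u2s

section Aux

variable {X U1 U2 Y : Type*} [Fintype X] [Fintype U1] [Fintype U2] [Fintype Y]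
  [DecidableEq X] [DecidableEq U1] [DecidableEq U2] [DecidableEq Y]
variable (init : X → ℝ) (inobs : X → Y → ℝ)
  (trans : X → U1 → U2 → X → ℝ) (obs : X → U1 → U2 → Y → ℝ)

/-- dynamics part of the density -/
def dynP {T : ℕ} (ω : Fin T → X × U1 × U2 × Y) : ℝ :=
  ∏ t : Fin T,
      if t.1 = 0 then init (ω t).1 * inobs (ω t).1 (ω t).2.2.2
      else
        trans (ω (predIdx t)).1 (ω (predIdx t)).2.1 (ω (predIdx t)).2.2.1
            (ω t).1 *
          obs (ω t).1 (ω (predIdx t)).2.1 (ω (predIdx t)).2.2.1 (ω t).2.2.2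

def g1P (g1 : Strat1 X U1 U2 Y) {T : ℕ} (ω : Fin T → X × U1 × U2 × Y) : ℝ :=
  ∏ t : Fin T, g1 t.1 (xpre ω t) (ypre ω t) (u1pre ω t) (u2pre ω t) (ω t).2.1

def g2P (g2 : Strat2 U2 Y) {T : ℕ} (ω : Fin T → X × U1 × U2 × Y) : ℝ :=
  ∏ t : Fin T, g2 t.1 (ypre ω t) (u2pre ω t) (ω t).2.2.1

lemma dens_eq (g1 : Strat1 X U1 U2 Y) (g2 : Strat2 U2 Y) {T : ℕ}
    (ω : Fin T → X × U1 × U2 × Y) :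
    dens init inobs trans obs g1 g2 ω
      = dynP init inobs trans obs ω * g1P g1 ω * g2P g2 ω := rfl

/-- value of `Fin.snoc` at an index below `m`. -/
lemma snoc_val_lt {γ : Type*} {m : ℕ} (σ : Fin m → γ) (e : γ) (i : Fin (m+1))
    (h : i.1 < m) : (Fin.snoc σ e : Fin (m+1) → γ) i = σ ⟨i.1, h⟩ := by
  simp [Fin.snoc, h]
  rfl

lemma snoc_eq_iff' {γ : Type*} {m : ℕ} {a : Fin m → γ} {b : γ}
    {c : Fin (m+1) → γ} :
    Fin.snoc a b = c ↔ a = Fin.init c ∧ b = c (Fin.last m) := by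
  constructor
  · rintro rfl
    constructor <;> simp
  · rintro ⟨rfl, rfl⟩
    exact Fin.snoc_init_self c

/-- sum over `Fin (m+1) → γ` via snoc decomposition -/
lemma sum_pi_snoc {γ : Type*} [Fintype γ] {m : ℕ} (f : (Fin (m+1) → γ) → ℝ) :
    ∑ σ : Fin (m+1) → γ, f σ
      = ∑ σ' : Fin m → γ, ∑ e : γ, f (Fin.snoc σ' e) := by
  calc ∑ σ : Fin (m+1) → γ, f σ
      = ∑ p : (Fin m → γ) × γ, f (Fin.snoc p.1 p.2) :=
        Fintype.sum_equiv
          ⟨fun σ => (Fin.init σ, σ (Fin.last m)), fun p => Fin.snoc p.1 p.2,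
            fun σ => Fin.snoc_init_self σ, fun p => by simp⟩
          _ _ (fun σ => by simp [Fin.snoc_init_self])
    _ = ∑ σ' : Fin m → γ, ∑ e : γ, f (Fin.snoc σ' e) := by rw [Fintype.sum_prod_type]

lemma sum_fiber {α β : Type*} [Fintype α] [Fintype β] [DecidableEq β]
    (p : α → β) (f : α → ℝ) (g : β → ℝ) :
    ∑ a, f a * g (p a) = ∑ b, (∑ a, if p a = b then f a else 0) * g b := by
  symm
  calc ∑ b, (∑ a, if p a = b then f a else 0) * g b
      = ∑ b, ∑ a, (if p a = b then f a * g b else 0) := by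
        refine Finset.sum_congr rfl fun b _ => ?_
        rw [Finset.sum_mul]
        exact Finset.sum_congr rfl fun a _ => by split <;> simp
    _ = ∑ a, ∑ b, (if p a = b then f a * g b else 0) := Finset.sum_comm
    _ = ∑ a, f a * g (p a) := Finset.sum_congr rfl fun a _ => by
        rw [Finset.sum_ite_eq]
        simp

lemma sum_ite_eq_and {γ : Type*} [Fintype γ] [DecidableEq γ]
    (P : Prop) [Decidable P] (b : γ) (f : γ → ℝ) :
    ∑ e : γ, (if e = b ∧ P then f e else 0) = if P then f b else 0 := by
  by_cases hP : P <;> simp [hP]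

end Aux

section Aux2

variable {X U1 U2 Y : Type*} [Fintype X] [Fintype U1] [Fintype U2] [Fintype Y]
  [DecidableEq X] [DecidableEq U1] [DecidableEq U2] [DecidableEq Y]
variable (init : X → ℝ) (inobs : X → Y → ℝ)
  (trans : X → U1 → U2 → X → ℝ) (obs : X → U1 → U2 → Y → ℝ)

lemma fn_eq_snoc {γ : Type*} {m : ℕ} (f : Fin (m+1) → γ) :
    f = Fin.snoc (fun i => f (Fin.castSucc i)) (f (Fin.last m)) :=
  (Fin.snoc_init_self f).symm

lemma xpre_snoc_cast {m : ℕ} (σ' : Fin m → X × U1 × U2 × Y) (e) (s : Fin m) :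
    xpre (Fin.snoc σ' e) (Fin.castSucc s) = xpre σ' s :=
  funext fun j => congrArg Prod.fst
    (snoc_val_lt σ' e _ (lt_of_lt_of_le j.isLt s.isLt))

lemma ypre_snoc_cast {m : ℕ} (σ' : Fin m → X × U1 × U2 × Y) (e) (s : Fin m) :
    ypre (Fin.snoc σ' e) (Fin.castSucc s) = ypre σ' s :=
  funext fun j => congrArg (fun p => p.2.2.2)
    (snoc_val_lt σ' e _ (lt_of_lt_of_le j.isLt s.isLt))

lemma u1pre_snoc_cast {m : ℕ} (σ' : Fin m → X × U1 × U2 × Y) (e) (s : Fin m) :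
    u1pre (Fin.snoc σ' e) (Fin.castSucc s) = u1pre σ' s :=
  funext fun j => congrArg (fun p => p.2.1)
    (snoc_val_lt σ' e _ (lt_trans j.isLt s.isLt))

lemma u2pre_snoc_cast {m : ℕ} (σ' : Fin m → X × U1 × U2 × Y) (e) (s : Fin m) :
    u2pre (Fin.snoc σ' e) (Fin.castSucc s) = u2pre σ' s :=
  funext fun j => congrArg (fun p => p.2.2.1)
    (snoc_val_lt σ' e _ (lt_trans j.isLt s.isLt))

lemma xpre_snoc_last {m : ℕ} (σ' : Fin m → X × U1 × U2 × Y) (e) :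
    xpre (Fin.snoc σ' e) (Fin.last m)
      = Fin.snoc (fun i => (σ' i).1) e.1 := by
  funext j
  rcases Nat.lt_or_ge j.1 m with h | h
  · exact (congrArg Prod.fst (snoc_val_lt σ' e _ h)).trans
      (snoc_val_lt (fun i => (σ' i).1) e.1 j h).symm
  · have hj : j = Fin.last m := Fin.ext (le_antisymm (Nat.lt_succ_iff.mp j.isLt) h)
    subst hj
    show ((Fin.snoc σ' e : Fin (m+1) → _) (Fin.last m)).1
        = (Fin.snoc (fun i => (σ' i).1) e.1 : Fin (m+1) → X) (Fin.last m)
    rw [Fin.snoc_last, Fin.snoc_last]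

lemma ypre_snoc_last {m : ℕ} (σ' : Fin m → X × U1 × U2 × Y) (e) :
    ypre (Fin.snoc σ' e) (Fin.last m)
      = Fin.snoc (fun i => (σ' i).2.2.2) e.2.2.2 := by
  funext j
  rcases Nat.lt_or_ge j.1 m with h | h
  · exact (congrArg (fun p => p.2.2.2) (snoc_val_lt σ' e _ h)).trans
      (snoc_val_lt (fun i => (σ' i).2.2.2) e.2.2.2 j h).symm
  · have hj : j = Fin.last m := Fin.ext (le_antisymm (Nat.lt_succ_iff.mp j.isLt) h)
    subst hj
    show ((Fin.snoc σ' e : Fin (m+1) → _) (Fin.last m)).2.2.2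
        = (Fin.snoc (fun i => (σ' i).2.2.2) e.2.2.2 : Fin (m+1) → Y) (Fin.last m)
    rw [Fin.snoc_last, Fin.snoc_last]

lemma u1pre_snoc_last {m : ℕ} (σ' : Fin m → X × U1 × U2 × Y) (e) :
    u1pre (Fin.snoc σ' e) (Fin.last m) = fun i => (σ' i).2.1 :=
  funext fun j => congrArg (fun p => p.2.1) (snoc_val_lt σ' e _ j.isLt)

lemma u2pre_snoc_last {m : ℕ} (σ' : Fin m → X × U1 × U2 × Y) (e) :
    u2pre (Fin.snoc σ' e) (Fin.last m) = fun i => (σ' i).2.2.1 :=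
  funext fun j => congrArg (fun p => p.2.2.1) (snoc_val_lt σ' e _ j.isLt)

lemma dynP_snoc_zero (σ' : Fin 0 → X × U1 × U2 × Y) (e) :
    dynP init inobs trans obs (Fin.snoc σ' e)
      = init e.1 * inobs e.1 e.2.2.2 := by
  unfold dynP
  rw [Fin.prod_univ_one]
  have h0 : (Fin.snoc σ' e : Fin 1 → _) 0 = e := by
    show (Fin.snoc σ' e : Fin 1 → _) (Fin.last 0) = e
    rw [Fin.snoc_last]
  simp [h0]

lemma dynP_snoc_succ {m : ℕ} (σ' : Fin (m+1) → X × U1 × U2 × Y) (e) :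
    dynP init inobs trans obs (Fin.snoc σ' e)
      = dynP init inobs trans obs σ' *
        (trans (σ' (Fin.last m)).1 (σ' (Fin.last m)).2.1
            (σ' (Fin.last m)).2.2.1 e.1 *
          obs e.1 (σ' (Fin.last m)).2.1 (σ' (Fin.last m)).2.2.1 e.2.2.2) := by
  unfold dynP
  rw [Fin.prod_univ_castSucc]
  congr 1
  · refine Finset.prod_congr rfl fun s _ => ?_
    have h1 : (Fin.snoc σ' e : Fin (m+2) → _) (Fin.castSucc s) = σ' s :=
      Fin.snoc_castSucc ..
    have h2 : (Fin.snoc σ' e : Fin (m+2) → _) (predIdx (Fin.castSucc s))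
        = σ' (predIdx s) :=
      snoc_val_lt σ' e _ (lt_of_le_of_lt (Nat.sub_le _ _) s.isLt)
    show (if s.1 = 0 then _ else _) = _
    rw [h1, h2]
  · have h1 : (Fin.snoc σ' e : Fin (m+2) → _) (Fin.last (m+1)) = e := Fin.snoc_last ..
    have h2 : (Fin.snoc σ' e : Fin (m+2) → _) (predIdx (Fin.last (m+1)))
        = σ' (Fin.last m) :=
      snoc_val_lt σ' e _ (Nat.lt_succ_self m)
    show (if (m+1) = 0 then _ else _) = _
    rw [if_neg (Nat.succ_ne_zero m), h1, h2]

lemma g1P_snoc (g1' : Strat1 X U1 U2 Y) {m : ℕ}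
    (σ' : Fin m → X × U1 × U2 × Y) (e) :
    g1P g1' (Fin.snoc σ' e)
      = g1P g1' σ' *
        g1' m (Fin.snoc (fun i => (σ' i).1) e.1)
          (Fin.snoc (fun i => (σ' i).2.2.2) e.2.2.2)
          (fun i => (σ' i).2.1) (fun i => (σ' i).2.2.1) e.2.1 := by
  unfold g1P
  rw [Fin.prod_univ_castSucc]
  congr 1
  · refine Finset.prod_congr rfl fun s _ => ?_
    show g1' s.1 _ _ _ _ _ = _
    rw [xpre_snoc_cast, ypre_snoc_cast, u1pre_snoc_cast, u2pre_snoc_cast,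
      Fin.snoc_castSucc]
  · show g1' m _ _ _ _ ((Fin.snoc σ' e : Fin (m+1) → _) (Fin.last m)).2.1 = _
    rw [xpre_snoc_last, ypre_snoc_last, u1pre_snoc_last, u2pre_snoc_last,
      Fin.snoc_last]

lemma g2P_snoc (g2 : Strat2 U2 Y) {m : ℕ}
    (σ' : Fin m → X × U1 × U2 × Y) (e) :
    g2P g2 (Fin.snoc σ' e)
      = g2P g2 σ' *
        g2 m (Fin.snoc (fun i => (σ' i).2.2.2) e.2.2.2)
          (fun i => (σ' i).2.2.1) e.2.2.1 := by
  unfold g2P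
  rw [Fin.prod_univ_castSucc]
  congr 1
  · refine Finset.prod_congr rfl fun s _ => ?_
    show g2 s.1 _ _ _ = _
    rw [ypre_snoc_cast, u2pre_snoc_cast, Fin.snoc_castSucc]
  · show g2 m _ _ ((Fin.snoc σ' e : Fin (m+1) → _) (Fin.last m)).2.2.1 = _
    rw [ypre_snoc_last, u2pre_snoc_last, Fin.snoc_last]

lemma sum_kernel (A : X → ℝ) (B : X → Y → ℝ) (C : X → Y → U1 → ℝ)
    (D : X → Y → U2 → ℝ)
    (hA : ∑ x, A x = 1) (hB : ∀ x, ∑ y, B x y = 1)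
    (hC : ∀ x y, ∑ u, C x y u = 1) (hD : ∀ x y, ∑ u, D x y u = 1) :
    ∑ e : X × U1 × U2 × Y,
      A e.1 * B e.1 e.2.2.2 * C e.1 e.2.2.2 e.2.1 * D e.1 e.2.2.2 e.2.2.1
      = 1 := by
  rw [Fintype.sum_prod_type]
  have key : ∀ x : X,
      (∑ p : U1 × U2 × Y,
        A x * B x p.2.2 * C x p.2.2 p.1 * D x p.2.2 p.2.1) = A x := by
    intro x
    rw [Fintype.sum_prod_type]
    have swap : (∑ u1 : U1, ∑ q : U2 × Y,
          A x * B x q.2 * C x q.2 u1 * D x q.2 q.1)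
        = ∑ u1 : U1, ∑ y : Y, ∑ u2 : U2,
          A x * B x y * C x y u1 * D x y u2 := by
      refine Finset.sum_congr rfl fun u1 _ => ?_
      rw [Fintype.sum_prod_type]
      exact Finset.sum_comm
    rw [swap]
    have inner : ∀ u1 y, (∑ u2 : U2, A x * B x y * C x y u1 * D x y u2)
        = A x * B x y * C x y u1 := by
      intro u1 y
      rw [← Finset.mul_sum, hD, mul_one]
    calc ∑ u1 : U1, ∑ y : Y, ∑ u2 : U2, A x * B x y * C x y u1 * D x y u2
        = ∑ y : Y, ∑ u1 : U1, A x * B x y * C x y u1 := by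
          rw [Finset.sum_comm]
          exact Finset.sum_congr rfl fun y _ =>
            Finset.sum_congr rfl fun u1 _ => inner u1 y
      _ = ∑ y : Y, A x * B x y := by
          refine Finset.sum_congr rfl fun y _ => ?_
          have : ∀ u1, A x * B x y * C x y u1 = A x * B x y * C x y u1 := fun _ => rfl
          rw [← Finset.mul_sum, hC, mul_one]
      _ = A x := by rw [← Finset.mul_sum, hB, mul_one]
  calc ∑ x : X, ∑ p : U1 × U2 × Y,
        A x * B x p.2.2 * C x p.2.2 p.1 * D x p.2.2 p.2.1
      = ∑ x : X, A x := Finset.sum_congr rfl fun x _ => key x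
    _ = 1 := hA

end Aux2

section Aux3

variable {X U1 U2 Y : Type*} [Fintype X] [Fintype U1] [Fintype U2] [Fintype Y]
  [DecidableEq X] [DecidableEq U1] [DecidableEq U2] [DecidableEq Y]
variable (init : X → ℝ) (inobs : X → Y → ℝ)
  (trans : X → U1 → U2 → X → ℝ) (obs : X → U1 → U2 → Y → ℝ)
/-- player-2 factor determined by the conditioning information. -/
def g2C (g2 : Strat2 U2 Y) (k : ℕ) (yh : Fin (k+1) → Y) (u2h : Fin k → U2)
    (u2t : U2) : ℝ :=
  ∏ s : Fin (k+1),
    g2 s.1 (fun i => yh ⟨i.1, lt_of_lt_of_le i.isLt s.isLt⟩)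
      (fun i => (Fin.snoc u2h u2t : Fin (k+1) → U2) ⟨i.1, lt_trans i.isLt s.isLt⟩)
      ((Fin.snoc u2h u2t : Fin (k+1) → U2) s)

lemma g2P_cond (g2 : Strat2 U2 Y) {k : ℕ} (σ : Fin (k+1) → X × U1 × U2 × Y)
    (yh : Fin (k+1) → Y) (u2h : Fin k → U2) (u2t : U2)
    (hY : ypre σ (Fin.last k) = yh) (hU2t : (σ (Fin.last k)).2.2.1 = u2t)
    (hU : u2pre σ (Fin.last k) = u2h) :
    g2P g2 σ = g2C g2 k yh u2h u2t := by
  unfold g2P g2C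
  refine Finset.prod_congr rfl fun s _ => ?_
  have hy : ypre σ s = fun i => yh ⟨i.1, lt_of_lt_of_le i.isLt s.isLt⟩ :=
    funext fun i => congrFun hY ⟨i.1, lt_of_lt_of_le i.isLt s.isLt⟩
  have hu : u2pre σ s = fun i =>
      (Fin.snoc u2h u2t : Fin (k+1) → U2) ⟨i.1, lt_trans i.isLt s.isLt⟩ := by
    funext i
    have hik : i.1 < k := lt_of_lt_of_le i.isLt (Nat.lt_succ_iff.mp s.isLt)
    exact (congrFun hU ⟨i.1, hik⟩).trans
      (snoc_val_lt u2h u2t ⟨i.1, lt_trans i.isLt s.isLt⟩ hik).symm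
  have hval : (σ s).2.2.1 = (Fin.snoc u2h u2t : Fin (k+1) → U2) s := by
    rcases Nat.lt_or_ge s.1 k with h | h
    · exact (congrFun hU ⟨s.1, h⟩).trans (snoc_val_lt u2h u2t s h).symm
    · have hs : s = Fin.last k :=
        Fin.ext (le_antisymm (Nat.lt_succ_iff.mp s.isLt) h)
      subst hs
      rw [hU2t]
      show u2t = (Fin.snoc u2h u2t : Fin (k+1) → U2) (Fin.last k)
      rw [Fin.snoc_last]
  rw [hy, hu, hval]


variable (hinit : (∀ x, 0 ≤ init x) ∧ ∑ x, init x = 1)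
  (hinobs : ∀ x, (∀ y, 0 ≤ inobs x y) ∧ ∑ y, inobs x y = 1)
  (htrans : ∀ x u1 u2, (∀ x', 0 ≤ trans x u1 u2 x') ∧
    ∑ x', trans x u1 u2 x' = 1)
  (hobs : ∀ x u1 u2, (∀ y, 0 ≤ obs x u1 u2 y) ∧ ∑ y, obs x u1 u2 y = 1)

include hinit hinobs htrans hobs

lemma sum_dens_snoc (g1' : Strat1 X U1 U2 Y) (hg1' : valid1 g1')
    (g2 : Strat2 U2 Y) (hg2 : valid2 g2) {m : ℕ} (ω : Fin m → X × U1 × U2 × Y) :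
    ∑ e : X × U1 × U2 × Y,
      dens init inobs trans obs g1' g2 (Fin.snoc ω e)
      = dens init inobs trans obs g1' g2 ω := by
  cases m with
  | zero =>
    have hω : dens init inobs trans obs g1' g2 ω = 1 := by
      show (∏ t : Fin 0, _) * (∏ t : Fin 0, _) * (∏ t : Fin 0, _) = 1
      simp
    rw [hω]
    calc ∑ e : X × U1 × U2 × Y, dens init inobs trans obs g1' g2 (Fin.snoc ω e)
        = ∑ e : X × U1 × U2 × Y,
            init e.1 * inobs e.1 e.2.2.2 *
              (g1' 0 (Fin.snoc (fun i => (ω i).1) e.1)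
                (Fin.snoc (fun i => (ω i).2.2.2) e.2.2.2)
                (fun i => (ω i).2.1) (fun i => (ω i).2.2.1) e.2.1) *
              (g2 0 (Fin.snoc (fun i => (ω i).2.2.2) e.2.2.2)
                (fun i => (ω i).2.2.1) e.2.2.1) := by
          refine Finset.sum_congr rfl fun e _ => ?_
          rw [dens_eq, dynP_snoc_zero, g1P_snoc, g2P_snoc]
          have h1 : g1P g1' ω = 1 := by
            show (∏ t : Fin 0, _) = 1
            simp
          have h2 : g2P g2 ω = 1 := by
            show (∏ t : Fin 0, _) = 1
            simp
          rw [h1, h2]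
          ring
      _ = 1 := by
          refine sum_kernel (fun x => init x)
            (fun x y => inobs x y)
            (fun x y u => g1' 0 (Fin.snoc (fun i => (ω i).1) x)
              (Fin.snoc (fun i => (ω i).2.2.2) y)
              (fun i => (ω i).2.1) (fun i => (ω i).2.2.1) u)
            (fun x y u => g2 0 (Fin.snoc (fun i => (ω i).2.2.2) y)
              (fun i => (ω i).2.2.1) u)
            hinit.2 (fun x => (hinobs x).2)
            (fun x y => (hg1' 0 _ _ _ _).2) (fun x y => (hg2 0 _ _).2)
  | succ m =>
    calc ∑ e : X × U1 × U2 × Y, dens init inobs trans obs g1' g2 (Fin.snoc ω e)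
        = ∑ e : X × U1 × U2 × Y,
            dens init inobs trans obs g1' g2 ω *
            (trans (ω (Fin.last m)).1 (ω (Fin.last m)).2.1
                (ω (Fin.last m)).2.2.1 e.1 *
              (obs e.1 (ω (Fin.last m)).2.1 (ω (Fin.last m)).2.2.1 e.2.2.2) *
              (g1' (m+1) (Fin.snoc (fun i => (ω i).1) e.1)
                (Fin.snoc (fun i => (ω i).2.2.2) e.2.2.2)
                (fun i => (ω i).2.1) (fun i => (ω i).2.2.1) e.2.1) *
              (g2 (m+1) (Fin.snoc (fun i => (ω i).2.2.2) e.2.2.2)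
                (fun i => (ω i).2.2.1) e.2.2.1)) := by
          refine Finset.sum_congr rfl fun e _ => ?_
          rw [dens_eq, dynP_snoc_succ, g1P_snoc, g2P_snoc, dens_eq]
          ring
      _ = dens init inobs trans obs g1' g2 ω := by
          rw [← Finset.mul_sum]
          have := sum_kernel
            (fun x => trans (ω (Fin.last m)).1 (ω (Fin.last m)).2.1
                (ω (Fin.last m)).2.2.1 x)
            (fun x y => obs x (ω (Fin.last m)).2.1 (ω (Fin.last m)).2.2.1 y)
            (fun x y u => g1' (m+1) (Fin.snoc (fun i => (ω i).1) x)
              (Fin.snoc (fun i => (ω i).2.2.2) y)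
              (fun i => (ω i).2.1) (fun i => (ω i).2.2.1) u)
            (fun x y u => g2 (m+1) (Fin.snoc (fun i => (ω i).2.2.2) y)
              (fun i => (ω i).2.2.1) u)
            (htrans _ _ _).2 (fun x => (hobs _ _ _).2)
            (fun x y => (hg1' (m+1) _ _ _ _).2) (fun x y => (hg2 (m+1) _ _).2)
          rw [show ∑ e : X × U1 × U2 × Y,
              (trans (ω (Fin.last m)).1 (ω (Fin.last m)).2.1
                  (ω (Fin.last m)).2.2.1 e.1 *
                (obs e.1 (ω (Fin.last m)).2.1 (ω (Fin.last m)).2.2.1 e.2.2.2) *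
                (g1' (m+1) (Fin.snoc (fun i => (ω i).1) e.1)
                  (Fin.snoc (fun i => (ω i).2.2.2) e.2.2.2)
                  (fun i => (ω i).2.1) (fun i => (ω i).2.2.1) e.2.1) *
                (g2 (m+1) (Fin.snoc (fun i => (ω i).2.2.2) e.2.2.2)
                  (fun i => (ω i).2.2.1) e.2.2.1)) = 1 from this, mul_one]

lemma marg (g1' : Strat1 X U1 U2 Y) (hg1' : valid1 g1')
    (g2 : Strat2 U2 Y) (hg2 : valid2 g2) {Tn k : ℕ} (h : k ≤ Tn)
    (g : (Fin k → X × U1 × U2 × Y) → ℝ) :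
    ∑ ω : Fin Tn → X × U1 × U2 × Y,
      g (fun i => ω (Fin.castLE h i)) * dens init inobs trans obs g1' g2 ω
      = ∑ σ : Fin k → X × U1 × U2 × Y,
          g σ * dens init inobs trans obs g1' g2 σ := by
  induction Tn, h using Nat.le_induction with
  | base =>
    refine Finset.sum_congr rfl fun ω _ => ?_
    have : (fun i => ω (Fin.castLE le_rfl i)) = ω :=
      funext fun i => congrArg ω (Fin.ext rfl)
    rw [this]
  | succ n hn ih =>
    refine Eq.trans ?_ ih
    rw [sum_pi_snoc]
    refine Finset.sum_congr rfl fun σ' _ => ?_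
    have harg : ∀ e : X × U1 × U2 × Y,
        (fun i => (Fin.snoc σ' e : Fin (n+1) → _)
            (Fin.castLE (Nat.le_succ_of_le hn) i))
          = fun i => σ' (Fin.castLE hn i) := by
      intro e
      funext i
      exact snoc_val_lt σ' e _ (lt_of_lt_of_le i.isLt hn)
    have h2 : (∑ e : X × U1 × U2 × Y,
          g (fun i => (Fin.snoc σ' e : Fin (n+1) → _)
              (Fin.castLE (Nat.le_succ_of_le hn) i)) *
            dens init inobs trans obs g1' g2 (Fin.snoc σ' e))
        = ∑ e : X × U1 × U2 × Y,
            g (fun i => σ' (Fin.castLE hn i)) *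
              dens init inobs trans obs g1' g2 (Fin.snoc σ' e) :=
      Finset.sum_congr rfl fun e _ => by rw [harg e]
    rw [h2, ← Finset.mul_sum,
      sum_dens_snoc init inobs trans obs hinit hinobs htrans hobs
        g1' hg1' g2 hg2 σ']

end Aux3

section Aux4

variable {X U1 U2 Y : Type*} [Fintype X] [Fintype U1] [Fintype U2] [Fintype Y]
  [DecidableEq X] [DecidableEq U1] [DecidableEq U2] [DecidableEq Y]
variable (init : X → ℝ) (inobs : X → Y → ℝ)
  (trans : X → U1 → U2 → X → ℝ) (obs : X → U1 → U2 → Y → ℝ)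

lemma empty_fun_eq {γ : Type*} (f g : Fin 0 → γ) : f = g :=
  funext fun i => i.elim0

/-- partial joint density of `(X_k, U^1_k)` together with pinned
`(Y_{0:k}, U^2_{0:k})`, with no player-2 factors. -/
def Fv (g1' : Strat1 X U1 U2 Y) (k : ℕ) (ys : Fin (k+1) → Y)
    (u2s : Fin k → U2) (x : X) (u : U1) (v : U2) : ℝ :=
  ∑ σ : Fin (k+1) → X × U1 × U2 × Y,
    if (σ (Fin.last k)).1 = x ∧ (σ (Fin.last k)).2.1 = u ∧
        (σ (Fin.last k)).2.2.1 = v ∧ ypre σ (Fin.last k) = ys ∧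
        u2pre σ (Fin.last k) = u2s then
      dynP init inobs trans obs σ * g1P g1' σ else 0

def StepF (g1' : Strat1 X U1 U2 Y) (k : ℕ) (ys : Fin (k+2) → Y)
    (u2s : Fin (k+1) → U2) (x' : X) (u' : U1) : ℝ :=
  ∑ σ' : Fin (k+1) → X × U1 × U2 × Y,
    if ypre σ' (Fin.last k) = Fin.init ys ∧
        (σ' (Fin.last k)).2.2.1 = u2s (Fin.last k) ∧
        u2pre σ' (Fin.last k) = Fin.init u2s then
      dynP init inobs trans obs σ' * g1P g1' σ' *
        (trans (σ' (Fin.last k)).1 (σ' (Fin.last k)).2.1 (u2s (Fin.last k)) x' *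
         obs x' (σ' (Fin.last k)).2.1 (u2s (Fin.last k)) (ys (Fin.last (k+1))) *
         g1' (k+1) (Fin.snoc (fun i => (σ' i).1) x') ys
           (fun i => (σ' i).2.1) u2s u')
    else 0

lemma Fv_nonneg (hinit : (∀ x, 0 ≤ init x) ∧ ∑ x, init x = 1)
    (hinobs : ∀ x, (∀ y, 0 ≤ inobs x y) ∧ ∑ y, inobs x y = 1)
    (htrans : ∀ x u1 u2, (∀ x', 0 ≤ trans x u1 u2 x') ∧
      ∑ x', trans x u1 u2 x' = 1)
    (hobs : ∀ x u1 u2, (∀ y, 0 ≤ obs x u1 u2 y) ∧ ∑ y, obs x u1 u2 y = 1)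
    (g1' : Strat1 X U1 U2 Y) (hg1' : valid1 g1') (k : ℕ)
    (ys : Fin (k+1) → Y) (u2s : Fin k → U2) (x : X) (u : U1) (v : U2) :
    0 ≤ Fv init inobs trans obs g1' k ys u2s x u v := by
  refine Finset.sum_nonneg fun σ _ => ?_
  split
  · refine mul_nonneg (Finset.prod_nonneg fun t _ => ?_)
      (Finset.prod_nonneg fun t _ => (hg1' _ _ _ _ _).1 _)
    split
    · exact mul_nonneg (hinit.1 _) ((hinobs _).1 _)
    · exact mul_nonneg ((htrans _ _ _).1 _) ((hobs _ _ _).1 _)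
  · exact le_rfl


lemma Fv0 (g1' : Strat1 X U1 U2 Y) (ys : Fin 1 → Y) (u2s : Fin 0 → U2)
    (x : X) (u : U1) (v : U2) :
    Fv init inobs trans obs g1' 0 ys u2s x u v
      = init x * inobs x (ys (Fin.last 0)) *
        g1' 0 (fun _ => x) ys Fin.elim0 Fin.elim0 u := by
  unfold Fv
  rw [sum_pi_snoc]
  rw [Fintype.sum_unique]
  set δ : Fin 0 → X × U1 × U2 × Y := default with hδ
  have hcond : ∀ e : X × U1 × U2 × Y,
      (((Fin.snoc δ e : Fin 1 → _) (Fin.last 0)).1 = x ∧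
       ((Fin.snoc δ e : Fin 1 → _) (Fin.last 0)).2.1 = u ∧
       ((Fin.snoc δ e : Fin 1 → _) (Fin.last 0)).2.2.1 = v ∧
       ypre (Fin.snoc δ e) (Fin.last 0) = ys ∧
       u2pre (Fin.snoc δ e) (Fin.last 0) = u2s)
      ↔ e = (x, u, v, ys (Fin.last 0)) := by
    intro e
    rw [Fin.snoc_last, ypre_snoc_last, u2pre_snoc_last, snoc_eq_iff']
    have h1 : ((fun i : Fin 0 => (δ i).2.2.2) = Fin.init ys) := empty_fun_eq _ _
    have h2 : ((fun i : Fin 0 => (δ i).2.2.1) = u2s) := empty_fun_eq _ _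
    simp only [h1, h2, true_and, and_true, Prod.ext_iff]
  calc (∑ e : X × U1 × U2 × Y,
        if ((Fin.snoc δ e : Fin 1 → _) (Fin.last 0)).1 = x ∧
            ((Fin.snoc δ e : Fin 1 → _) (Fin.last 0)).2.1 = u ∧
            ((Fin.snoc δ e : Fin 1 → _) (Fin.last 0)).2.2.1 = v ∧
            ypre (Fin.snoc δ e) (Fin.last 0) = ys ∧
            u2pre (Fin.snoc δ e) (Fin.last 0) = u2s then
          dynP init inobs trans obs (Fin.snoc δ e) * g1P g1' (Fin.snoc δ e)
        else 0)
      = ∑ e : X × U1 × U2 × Y,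
          if e = (x, u, v, ys (Fin.last 0)) then
            dynP init inobs trans obs (Fin.snoc δ e) * g1P g1' (Fin.snoc δ e)
          else 0 :=
        Finset.sum_congr rfl fun e _ => if_congr (hcond e) rfl rfl
    _ = dynP init inobs trans obs (Fin.snoc δ (x, u, v, ys (Fin.last 0))) *
          g1P g1' (Fin.snoc δ (x, u, v, ys (Fin.last 0))) := by
        rw [Finset.sum_ite_eq']
        simp
    _ = init x * inobs x (ys (Fin.last 0)) *
          g1' 0 (fun _ => x) ys Fin.elim0 Fin.elim0 u := by
        rw [dynP_snoc_zero, g1P_snoc]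
        have hg1Pδ : g1P g1' δ = 1 := by
          show (∏ t : Fin 0, _) = 1
          simp
        have hx : (Fin.snoc (fun i => (δ i).1) x : Fin 1 → X) = fun _ => x := by
          funext j
          have hj : j = Fin.last 0 := Fin.ext (by omega)
          rw [hj, Fin.snoc_last]
        have hy : (Fin.snoc (fun i => (δ i).2.2.2) (ys (Fin.last 0)) : Fin 1 → Y)
            = ys := by
          funext j
          have hj : j = Fin.last 0 := Fin.ext (by omega)
          rw [hj, Fin.snoc_last]
        have hu1 : (fun i : Fin 0 => (δ i).2.1) = Fin.elim0 := empty_fun_eq _ _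
        have hu2 : (fun i : Fin 0 => (δ i).2.2.1) = Fin.elim0 := empty_fun_eq _ _
        rw [hg1Pδ, hx, hy, hu1, hu2, one_mul]

lemma FvR0 (g1' : Strat1 X U1 U2 Y) (k : ℕ) (ys : Fin (k+2) → Y)
    (u2s : Fin (k+1) → U2) (x' : X) (u' : U1) (v' : U2) :
    Fv init inobs trans obs g1' (k+1) ys u2s x' u' v'
      = StepF init inobs trans obs g1' k ys u2s x' u' := by
  unfold Fv StepF
  rw [sum_pi_snoc]
  refine Finset.sum_congr rfl fun σ' _ => ?_
  have hyc : (fun i : Fin (k+1) => (σ' i).2.2.2) = ypre σ' (Fin.last k) := rfl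
  have hsnu2 : (fun i : Fin (k+1) => (σ' i).2.2.1)
      = Fin.snoc (u2pre σ' (Fin.last k)) ((σ' (Fin.last k)).2.2.1) :=
    fn_eq_snoc _
  have hcond : ∀ e : X × U1 × U2 × Y,
      (((Fin.snoc σ' e : Fin (k+2) → _) (Fin.last (k+1))).1 = x' ∧
       ((Fin.snoc σ' e : Fin (k+2) → _) (Fin.last (k+1))).2.1 = u' ∧
       ((Fin.snoc σ' e : Fin (k+2) → _) (Fin.last (k+1))).2.2.1 = v' ∧
       ypre (Fin.snoc σ' e) (Fin.last (k+1)) = ys ∧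
       u2pre (Fin.snoc σ' e) (Fin.last (k+1)) = u2s)
      ↔ (e = (x', u', v', ys (Fin.last (k+1))) ∧
          (ypre σ' (Fin.last k) = Fin.init ys ∧
           (σ' (Fin.last k)).2.2.1 = u2s (Fin.last k) ∧
           u2pre σ' (Fin.last k) = Fin.init u2s)) := by
    intro e
    rw [Fin.snoc_last, ypre_snoc_last, u2pre_snoc_last, snoc_eq_iff',
      hsnu2, snoc_eq_iff', hyc]
    simp only [Prod.ext_iff]
    tauto
  have hcollapse : (∑ e : X × U1 × U2 × Y,
      if ((Fin.snoc σ' e : Fin (k+2) → _) (Fin.last (k+1))).1 = x' ∧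
          ((Fin.snoc σ' e : Fin (k+2) → _) (Fin.last (k+1))).2.1 = u' ∧
          ((Fin.snoc σ' e : Fin (k+2) → _) (Fin.last (k+1))).2.2.1 = v' ∧
          ypre (Fin.snoc σ' e) (Fin.last (k+1)) = ys ∧
          u2pre (Fin.snoc σ' e) (Fin.last (k+1)) = u2s then
        dynP init inobs trans obs (Fin.snoc σ' e) * g1P g1' (Fin.snoc σ' e)
      else 0)
      = if (ypre σ' (Fin.last k) = Fin.init ys ∧
           (σ' (Fin.last k)).2.2.1 = u2s (Fin.last k) ∧
           u2pre σ' (Fin.last k) = Fin.init u2s) then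
          dynP init inobs trans obs
              (Fin.snoc σ' (x', u', v', ys (Fin.last (k+1)))) *
            g1P g1' (Fin.snoc σ' (x', u', v', ys (Fin.last (k+1))))
        else 0 := by
    rw [Finset.sum_congr rfl fun e _ => if_congr (hcond e) rfl rfl]
    exact sum_ite_eq_and _ _ _
  rw [hcollapse]
  by_cases hC : (ypre σ' (Fin.last k) = Fin.init ys ∧
      (σ' (Fin.last k)).2.2.1 = u2s (Fin.last k) ∧
      u2pre σ' (Fin.last k) = Fin.init u2s)
  · rw [if_pos hC, if_pos hC]
    obtain ⟨hC1, hC2, hC3⟩ := hC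
    rw [dynP_snoc_succ, g1P_snoc]
    have hys : (Fin.snoc (fun i => (σ' i).2.2.2) (ys (Fin.last (k+1)))
        : Fin (k+2) → Y) = ys := by
      rw [hyc, hC1]
      exact Fin.snoc_init_self ys
    have hu2f : (fun i : Fin (k+1) => (σ' i).2.2.1) = u2s := by
      rw [hsnu2, hC2, hC3]
      exact Fin.snoc_init_self u2s
    rw [hys, hu2f, hC2]
    ring
  · rw [if_neg hC, if_neg hC]


lemma step_fiber (g1' : Strat1 X U1 U2 Y) (k : ℕ) (ys : Fin (k+2) → Y)
    (u2s : Fin (k+1) → U2) (g : X × U1 → ℝ) :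
    ∑ σ' : Fin (k+1) → X × U1 × U2 × Y,
      (if ypre σ' (Fin.last k) = Fin.init ys ∧
          (σ' (Fin.last k)).2.2.1 = u2s (Fin.last k) ∧
          u2pre σ' (Fin.last k) = Fin.init u2s then
        dynP init inobs trans obs σ' * g1P g1' σ' else 0) *
        g ((σ' (Fin.last k)).1, (σ' (Fin.last k)).2.1)
    = ∑ b : X × U1,
        Fv init inobs trans obs g1' k (Fin.init ys) (Fin.init u2s) b.1 b.2
          (u2s (Fin.last k)) * g b := by
  rw [sum_fiber (fun σ' : Fin (k+1) → X × U1 × U2 × Y =>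
    ((σ' (Fin.last k)).1, (σ' (Fin.last k)).2.1)) _ g]
  refine Finset.sum_congr rfl fun b _ => ?_
  congr 1
  unfold Fv
  refine Finset.sum_congr rfl fun σ' _ => ?_
  have hiff : (((σ' (Fin.last k)).1, (σ' (Fin.last k)).2.1) = b ∧
      (ypre σ' (Fin.last k) = Fin.init ys ∧
        (σ' (Fin.last k)).2.2.1 = u2s (Fin.last k) ∧
        u2pre σ' (Fin.last k) = Fin.init u2s))
      ↔ ((σ' (Fin.last k)).1 = b.1 ∧ (σ' (Fin.last k)).2.1 = b.2 ∧
          (σ' (Fin.last k)).2.2.1 = u2s (Fin.last k) ∧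
          ypre σ' (Fin.last k) = Fin.init ys ∧
          u2pre σ' (Fin.last k) = Fin.init u2s) := by
    simp only [Prod.ext_iff]
    tauto
  by_cases h1 : ((σ' (Fin.last k)).1, (σ' (Fin.last k)).2.1) = b
  · by_cases h2 : (ypre σ' (Fin.last k) = Fin.init ys ∧
        (σ' (Fin.last k)).2.2.1 = u2s (Fin.last k) ∧
        u2pre σ' (Fin.last k) = Fin.init u2s)
    · rw [if_pos h1, if_pos h2, if_pos (hiff.mp ⟨h1, h2⟩)]
    · rw [if_pos h1, if_neg h2, if_neg (fun hf => h2 (hiff.mpr hf).2)]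
  · rw [if_neg h1, if_neg (fun hf => h1 (hiff.mpr hf).1)]

lemma StepF_embed (h : (t : ℕ) → X → (Fin (t+1) → Y) → (Fin t → U2) → U1 → ℝ)
    (k : ℕ) (ys : Fin (k+2) → Y) (u2s : Fin (k+1) → U2) (x' : X) (u' : U1) :
    StepF init inobs trans obs (embed1 h) k ys u2s x' u'
      = h (k+1) x' ys u2s u' *
        ∑ b : X × U1,
          Fv init inobs trans obs (embed1 h) k (Fin.init ys) (Fin.init u2s)
              b.1 b.2 (u2s (Fin.last k)) *
            (trans b.1 b.2 (u2s (Fin.last k)) x' *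
              obs x' b.2 (u2s (Fin.last k)) (ys (Fin.last (k+1)))) := by
  set gg : X × U1 → ℝ := fun b =>
    trans b.1 b.2 (u2s (Fin.last k)) x' *
      obs x' b.2 (u2s (Fin.last k)) (ys (Fin.last (k+1))) with hgg
  have hfac : ∀ σ' : Fin (k+1) → X × U1 × U2 × Y,
      embed1 h (k+1) (Fin.snoc (fun i => (σ' i).1) x') ys
        (fun i => (σ' i).2.1) u2s u' = h (k+1) x' ys u2s u' := by
    intro σ'
    show h (k+1) ((Fin.snoc (fun i => (σ' i).1) x' : Fin (k+2) → X)
      (Fin.last (k+1))) ys u2s u' = _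
    rw [Fin.snoc_last]
  unfold StepF
  have hcong : ∀ σ' : Fin (k+1) → X × U1 × U2 × Y,
      (if ypre σ' (Fin.last k) = Fin.init ys ∧
          (σ' (Fin.last k)).2.2.1 = u2s (Fin.last k) ∧
          u2pre σ' (Fin.last k) = Fin.init u2s then
        dynP init inobs trans obs σ' * g1P (embed1 h) σ' *
          (trans (σ' (Fin.last k)).1 (σ' (Fin.last k)).2.1
              (u2s (Fin.last k)) x' *
            obs x' (σ' (Fin.last k)).2.1 (u2s (Fin.last k))
              (ys (Fin.last (k+1))) *
            embed1 h (k+1) (Fin.snoc (fun i => (σ' i).1) x') ys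
              (fun i => (σ' i).2.1) u2s u')
      else 0)
      = h (k+1) x' ys u2s u' *
          ((if ypre σ' (Fin.last k) = Fin.init ys ∧
              (σ' (Fin.last k)).2.2.1 = u2s (Fin.last k) ∧
              u2pre σ' (Fin.last k) = Fin.init u2s then
            dynP init inobs trans obs σ' * g1P (embed1 h) σ' else 0) *
            gg ((σ' (Fin.last k)).1, (σ' (Fin.last k)).2.1)) := by
    intro σ'
    by_cases hC : (ypre σ' (Fin.last k) = Fin.init ys ∧
        (σ' (Fin.last k)).2.2.1 = u2s (Fin.last k) ∧
        u2pre σ' (Fin.last k) = Fin.init u2s)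
    · rw [if_pos hC, if_pos hC, hfac σ']
      show _ = _ * (_ * (trans (σ' (Fin.last k)).1 (σ' (Fin.last k)).2.1
          (u2s (Fin.last k)) x' *
        obs x' (σ' (Fin.last k)).2.1 (u2s (Fin.last k)) (ys (Fin.last (k+1)))))
      ring
    · rw [if_neg hC, if_neg hC]
      ring
  rw [Finset.sum_congr rfl fun σ' _ => hcong σ', ← Finset.mul_sum,
    step_fiber init inobs trans obs (embed1 h) k ys u2s gg]

lemma StepF_sum (g1' : Strat1 X U1 U2 Y) (hg1' : valid1 g1')
    (k : ℕ) (ys : Fin (k+2) → Y) (u2s : Fin (k+1) → U2) (x' : X) :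
    ∑ u' : U1, StepF init inobs trans obs g1' k ys u2s x' u'
      = ∑ b : X × U1,
          Fv init inobs trans obs g1' k (Fin.init ys) (Fin.init u2s)
              b.1 b.2 (u2s (Fin.last k)) *
            (trans b.1 b.2 (u2s (Fin.last k)) x' *
              obs x' b.2 (u2s (Fin.last k)) (ys (Fin.last (k+1)))) := by
  set gg : X × U1 → ℝ := fun b =>
    trans b.1 b.2 (u2s (Fin.last k)) x' *
      obs x' b.2 (u2s (Fin.last k)) (ys (Fin.last (k+1))) with hgg
  unfold StepF
  rw [Finset.sum_comm]
  have hcong : ∀ σ' : Fin (k+1) → X × U1 × U2 × Y,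
      (∑ u' : U1,
        if ypre σ' (Fin.last k) = Fin.init ys ∧
            (σ' (Fin.last k)).2.2.1 = u2s (Fin.last k) ∧
            u2pre σ' (Fin.last k) = Fin.init u2s then
          dynP init inobs trans obs σ' * g1P g1' σ' *
            (trans (σ' (Fin.last k)).1 (σ' (Fin.last k)).2.1
                (u2s (Fin.last k)) x' *
              obs x' (σ' (Fin.last k)).2.1 (u2s (Fin.last k))
                (ys (Fin.last (k+1))) *
              g1' (k+1) (Fin.snoc (fun i => (σ' i).1) x') ys
                (fun i => (σ' i).2.1) u2s u')
        else 0)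
      = (if ypre σ' (Fin.last k) = Fin.init ys ∧
            (σ' (Fin.last k)).2.2.1 = u2s (Fin.last k) ∧
            u2pre σ' (Fin.last k) = Fin.init u2s then
          dynP init inobs trans obs σ' * g1P g1' σ' else 0) *
          gg ((σ' (Fin.last k)).1, (σ' (Fin.last k)).2.1) := by
    intro σ'
    by_cases hC : (ypre σ' (Fin.last k) = Fin.init ys ∧
        (σ' (Fin.last k)).2.2.1 = u2s (Fin.last k) ∧
        u2pre σ' (Fin.last k) = Fin.init u2s)
    · rw [Finset.sum_congr rfl fun u' (_ : u' ∈ Finset.univ) => if_pos hC,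
        if_pos hC]
      have hpull : (∑ u' : U1,
          dynP init inobs trans obs σ' * g1P g1' σ' *
            (trans (σ' (Fin.last k)).1 (σ' (Fin.last k)).2.1
                (u2s (Fin.last k)) x' *
              obs x' (σ' (Fin.last k)).2.1 (u2s (Fin.last k))
                (ys (Fin.last (k+1))) *
              g1' (k+1) (Fin.snoc (fun i => (σ' i).1) x') ys
                (fun i => (σ' i).2.1) u2s u'))
          = dynP init inobs trans obs σ' * g1P g1' σ' *
            (trans (σ' (Fin.last k)).1 (σ' (Fin.last k)).2.1
                (u2s (Fin.last k)) x' *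
              obs x' (σ' (Fin.last k)).2.1 (u2s (Fin.last k))
                (ys (Fin.last (k+1)))) *
            ∑ u' : U1, g1' (k+1) (Fin.snoc (fun i => (σ' i).1) x') ys
                (fun i => (σ' i).2.1) u2s u' := by
        rw [Finset.mul_sum]
        refine Finset.sum_congr rfl fun u' _ => by ring
      rw [hpull, (hg1' (k+1) _ _ _ _).2, mul_one]
    · rw [Finset.sum_congr rfl fun u' (_ : u' ∈ Finset.univ) => if_neg hC,
        if_neg hC]
      simp
  rw [Finset.sum_congr rfl fun σ' _ => hcong σ',
    step_fiber init inobs trans obs g1' k ys u2s gg]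

lemma Fv_v_indep (g1' : Strat1 X U1 U2 Y) (k : ℕ) (ys : Fin (k+1) → Y)
    (u2s : Fin k → U2) (x : X) (u : U1) (v v₂ : U2) :
    Fv init inobs trans obs g1' k ys u2s x u v
      = Fv init inobs trans obs g1' k ys u2s x u v₂ := by
  cases k with
  | zero => rw [Fv0, Fv0]
  | succ k => rw [FvR0, FvR0]

/-- the strategy `ḡ¹`. -/
noncomputable def gbarD (g1 : Strat1 X U1 U2 Y) (k : ℕ) (x : X) (ys : Fin (k+1) → Y)
    (u2s : Fin k → U2) (u : U1) : ℝ :=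
  if 0 < ∑ u' : U1, ∑ v : U2, Fv init inobs trans obs g1 k ys u2s x u' v then
    (∑ v : U2, Fv init inobs trans obs g1 k ys u2s x u v) /
      (∑ u' : U1, ∑ v : U2, Fv init inobs trans obs g1 k ys u2s x u' v)
  else (Fintype.card U1 : ℝ)⁻¹


variable (hinit : (∀ x, 0 ≤ init x) ∧ ∑ x, init x = 1)
  (hinobs : ∀ x, (∀ y, 0 ≤ inobs x y) ∧ ∑ y, inobs x y = 1)
  (htrans : ∀ x u1 u2, (∀ x', 0 ≤ trans x u1 u2 x') ∧
    ∑ x', trans x u1 u2 x' = 1)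
  (hobs : ∀ x u1 u2, (∀ y, 0 ≤ obs x u1 u2 y) ∧ ∑ y, obs x u1 u2 y = 1)

include hinit hinobs htrans hobs

lemma gbar_valid (g1 : Strat1 X U1 U2 Y) (hg1 : valid1 g1) (k : ℕ) (x : X)
    (ys : Fin (k+1) → Y) (u2s : Fin k → U2) :
    (∀ u, 0 ≤ gbarD init inobs trans obs g1 k x ys u2s u) ∧
    ∑ u, gbarD init inobs trans obs g1 k x ys u2s u = 1 := by
  have hFv : ∀ u v, 0 ≤ Fv init inobs trans obs g1 k ys u2s x u v :=
    fun u v => Fv_nonneg init inobs trans obs hinit hinobs htrans hobs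
      g1 hg1 k ys u2s x u v
  constructor
  · intro u
    unfold gbarD
    by_cases hpos :
        0 < ∑ u' : U1, ∑ v : U2, Fv init inobs trans obs g1 k ys u2s x u' v
    · rw [if_pos hpos]
      exact div_nonneg (Finset.sum_nonneg fun v _ => hFv u v) hpos.le
    · rw [if_neg hpos]
      exact inv_nonneg.2 (Nat.cast_nonneg _)
  · by_cases hpos :
        0 < ∑ u' : U1, ∑ v : U2, Fv init inobs trans obs g1 k ys u2s x u' v
    · calc ∑ u, gbarD init inobs trans obs g1 k x ys u2s u
          = ∑ u,
            (∑ v : U2, Fv init inobs trans obs g1 k ys u2s x u v) /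
              (∑ u' : U1, ∑ v : U2,
                Fv init inobs trans obs g1 k ys u2s x u' v) :=
            Finset.sum_congr rfl fun u _ => by unfold gbarD; rw [if_pos hpos]
        _ = 1 := by rw [← Finset.sum_div, div_self (ne_of_gt hpos)]
    · have hne : Nonempty U1 := by
        by_contra hemp
        rw [not_nonempty_iff] at hemp
        have h10 := (hg1 0 (fun _ => x) (fun _ => ys (Fin.last k))
          Fin.elim0 Fin.elim0).2
        rw [Finset.univ_eq_empty, Finset.sum_empty] at h10
        exact one_ne_zero h10.symm
      haveI := hne
      calc ∑ u, gbarD init inobs trans obs g1 k x ys u2s u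
          = ∑ _u : U1, (Fintype.card U1 : ℝ)⁻¹ :=
            Finset.sum_congr rfl fun u _ => by unfold gbarD; rw [if_neg hpos]
        _ = 1 := by
            rw [Finset.sum_const, Finset.card_univ, nsmul_eq_mul]
            exact mul_inv_cancel₀ (Nat.cast_ne_zero.2 Fintype.card_ne_zero)

lemma Fv_bar_eq (g1 : Strat1 X U1 U2 Y) (hg1 : valid1 g1) :
    ∀ (k : ℕ) (ys : Fin (k+1) → Y) (u2s : Fin k → U2) (x : X) (u : U1)
      (v : U2),
      Fv init inobs trans obs (embed1 (gbarD init inobs trans obs g1))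
          k ys u2s x u v
        = Fv init inobs trans obs g1 k ys u2s x u v := by
  intro k
  induction k with
  | zero =>
    intro ys u2s x u v
    rw [show u2s = (Fin.elim0 : Fin 0 → U2) from empty_fun_eq _ _]
    rw [Fv0, Fv0]
    have hred : embed1 (gbarD init inobs trans obs g1) 0 (fun _ => x) ys
        Fin.elim0 Fin.elim0 u = gbarD init inobs trans obs g1 0 x ys
          Fin.elim0 u := rfl
    rw [hred]
    have hFv0 : ∀ (u' : U1) (v' : U2),
        Fv init inobs trans obs g1 0 ys Fin.elim0 x u' v'
          = init x * inobs x (ys (Fin.last 0)) *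
            g1 0 (fun _ => x) ys Fin.elim0 Fin.elim0 u' :=
      fun u' v' => Fv0 init inobs trans obs g1 ys Fin.elim0 x u' v'
    have hN : ∀ u' : U1,
        (∑ v' : U2, Fv init inobs trans obs g1 0 ys Fin.elim0 x u' v')
          = (Fintype.card U2 : ℝ) * (init x * inobs x (ys (Fin.last 0)) *
              g1 0 (fun _ => x) ys Fin.elim0 Fin.elim0 u') := by
      intro u'
      rw [Finset.sum_congr rfl fun v' _ => hFv0 u' v', Finset.sum_const,
        Finset.card_univ, nsmul_eq_mul]
    have hS : (∑ u' : U1, ∑ v' : U2,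
          Fv init inobs trans obs g1 0 ys Fin.elim0 x u' v')
        = (Fintype.card U2 : ℝ) * (init x * inobs x (ys (Fin.last 0))) := by
      rw [Finset.sum_congr rfl fun u' _ => hN u']
      have : ∀ u' : U1, (Fintype.card U2 : ℝ) *
            (init x * inobs x (ys (Fin.last 0)) *
              g1 0 (fun _ => x) ys Fin.elim0 Fin.elim0 u')
          = ((Fintype.card U2 : ℝ) * (init x * inobs x (ys (Fin.last 0)))) *
              g1 0 (fun _ => x) ys Fin.elim0 Fin.elim0 u' := fun u' => by ring
      rw [Finset.sum_congr rfl fun u' _ => this u', ← Finset.mul_sum,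
        (hg1 0 _ _ _ _).2, mul_one]
    by_cases hpos : 0 < ∑ u' : U1, ∑ v' : U2,
        Fv init inobs trans obs g1 0 ys Fin.elim0 x u' v'
    · unfold gbarD
      rw [if_pos hpos, hN u, hS]
      have hSne : (Fintype.card U2 : ℝ) *
          (init x * inobs x (ys (Fin.last 0))) ≠ 0 := ne_of_gt (hS ▸ hpos)
      rw [show (Fintype.card U2 : ℝ) * (init x * inobs x (ys (Fin.last 0)) *
            g1 0 (fun _ => x) ys Fin.elim0 Fin.elim0 u)
          = g1 0 (fun _ => x) ys Fin.elim0 Fin.elim0 u *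
            ((Fintype.card U2 : ℝ) * (init x * inobs x (ys (Fin.last 0))))
          from by ring,
        mul_div_assoc, div_self hSne, mul_one]
    · unfold gbarD
      rw [if_neg hpos]
      haveI : Nonempty U2 := ⟨v⟩
      have hc0 : (0:ℝ) < (Fintype.card U2 : ℝ) := by
        exact_mod_cast Fintype.card_pos
      have hIge : 0 ≤ init x * inobs x (ys (Fin.last 0)) :=
        mul_nonneg (hinit.1 x) ((hinobs x).1 _)
      have hnpos : ¬ (0 < (Fintype.card U2 : ℝ) *
          (init x * inobs x (ys (Fin.last 0)))) := hS ▸ hpos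
      have hI0 : init x * inobs x (ys (Fin.last 0)) = 0 := by nlinarith
      rw [hI0]
      ring
  | succ k ih =>
    intro ys u2s x u v
    haveI : Nonempty U2 := ⟨v⟩
    rw [FvR0 init inobs trans obs (embed1 (gbarD init inobs trans obs g1))
      k ys u2s x u v]
    rw [StepF_embed]
    have hIH : (∑ b : X × U1,
          Fv init inobs trans obs (embed1 (gbarD init inobs trans obs g1))
              k (Fin.init ys) (Fin.init u2s) b.1 b.2 (u2s (Fin.last k)) *
            (trans b.1 b.2 (u2s (Fin.last k)) x *
              obs x b.2 (u2s (Fin.last k)) (ys (Fin.last (k+1)))))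
        = ∑ b : X × U1,
            Fv init inobs trans obs g1 k (Fin.init ys) (Fin.init u2s)
                b.1 b.2 (u2s (Fin.last k)) *
              (trans b.1 b.2 (u2s (Fin.last k)) x *
                obs x b.2 (u2s (Fin.last k)) (ys (Fin.last (k+1)))) :=
      Finset.sum_congr rfl fun b _ => by
        rw [ih (Fin.init ys) (Fin.init u2s) b.1 b.2 (u2s (Fin.last k))]
    rw [hIH]
    have hsumu : ∀ v'' : U2,
        (∑ u'' : U1, Fv init inobs trans obs g1 (k+1) ys u2s x u'' v'')
          = ∑ b : X × U1,
            Fv init inobs trans obs g1 k (Fin.init ys) (Fin.init u2s)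
                b.1 b.2 (u2s (Fin.last k)) *
              (trans b.1 b.2 (u2s (Fin.last k)) x *
                obs x b.2 (u2s (Fin.last k)) (ys (Fin.last (k+1)))) := by
      intro v''
      rw [Finset.sum_congr rfl fun u'' _ =>
        FvR0 init inobs trans obs g1 k ys u2s x u'' v'']
      exact StepF_sum init inobs trans obs g1 hg1 k ys u2s x
    have hNv : ∀ u'' : U1,
        (∑ v'' : U2, Fv init inobs trans obs g1 (k+1) ys u2s x u'' v'')
          = (Fintype.card U2 : ℝ) *
              Fv init inobs trans obs g1 (k+1) ys u2s x u'' v := by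
      intro u''
      rw [Finset.sum_congr rfl fun v'' _ =>
          Fv_v_indep init inobs trans obs g1 (k+1) ys u2s x u'' v'' v,
        Finset.sum_const, Finset.card_univ, nsmul_eq_mul]
    have hS : (∑ u'' : U1, ∑ v'' : U2,
          Fv init inobs trans obs g1 (k+1) ys u2s x u'' v'')
        = (Fintype.card U2 : ℝ) *
            ∑ b : X × U1,
              Fv init inobs trans obs g1 k (Fin.init ys) (Fin.init u2s)
                  b.1 b.2 (u2s (Fin.last k)) *
                (trans b.1 b.2 (u2s (Fin.last k)) x *
                  obs x b.2 (u2s (Fin.last k)) (ys (Fin.last (k+1)))) := by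
      rw [Finset.sum_congr rfl fun u'' _ => hNv u'', ← Finset.mul_sum,
        hsumu v]
    by_cases hpos : 0 < ∑ u'' : U1, ∑ v'' : U2,
        Fv init inobs trans obs g1 (k+1) ys u2s x u'' v''
    · have hcA : 0 < (Fintype.card U2 : ℝ) *
          ∑ b : X × U1,
            Fv init inobs trans obs g1 k (Fin.init ys) (Fin.init u2s)
                b.1 b.2 (u2s (Fin.last k)) *
              (trans b.1 b.2 (u2s (Fin.last k)) x *
                obs x b.2 (u2s (Fin.last k)) (ys (Fin.last (k+1)))) :=
        hS ▸ hpos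
      have hAne : (∑ b : X × U1,
          Fv init inobs trans obs g1 k (Fin.init ys) (Fin.init u2s)
              b.1 b.2 (u2s (Fin.last k)) *
            (trans b.1 b.2 (u2s (Fin.last k)) x *
              obs x b.2 (u2s (Fin.last k)) (ys (Fin.last (k+1))))) ≠ 0 := by
        intro h0
        rw [h0, mul_zero] at hcA
        exact lt_irrefl 0 hcA
      have hcne : (Fintype.card U2 : ℝ) ≠ 0 := by
        intro h0
        rw [h0, zero_mul] at hcA
        exact lt_irrefl 0 hcA
      unfold gbarD
      rw [if_pos hpos, hNv u, hS]
      rw [mul_div_mul_left _ _ hcne, div_mul_cancel₀ _ hAne]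
    · unfold gbarD
      rw [if_neg hpos]
      have hc0 : (0:ℝ) < (Fintype.card U2 : ℝ) := by
        exact_mod_cast Fintype.card_pos
      have hAge : 0 ≤ ∑ b : X × U1,
          Fv init inobs trans obs g1 k (Fin.init ys) (Fin.init u2s)
              b.1 b.2 (u2s (Fin.last k)) *
            (trans b.1 b.2 (u2s (Fin.last k)) x *
              obs x b.2 (u2s (Fin.last k)) (ys (Fin.last (k+1)))) :=
        Finset.sum_nonneg fun b _ => mul_nonneg
          (Fv_nonneg init inobs trans obs hinit hinobs htrans hobs g1 hg1
            k _ _ _ _ _)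
          (mul_nonneg ((htrans _ _ _).1 _) ((hobs _ _ _).1 _))
      have hnpos := hS ▸ hpos
      have hA0 : (∑ b : X × U1,
          Fv init inobs trans obs g1 k (Fin.init ys) (Fin.init u2s)
              b.1 b.2 (u2s (Fin.last k)) *
            (trans b.1 b.2 (u2s (Fin.last k)) x *
              obs x b.2 (u2s (Fin.last k)) (ys (Fin.last (k+1))))) = 0 := by
        nlinarith
      have hFvz : Fv init inobs trans obs g1 (k+1) ys u2s x u v = 0 := by
        have h1 : (∑ u'' : U1,
            Fv init inobs trans obs g1 (k+1) ys u2s x u'' v) = 0 := by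
          rw [hsumu v, hA0]
        have h2 : ∀ u'' ∈ (Finset.univ : Finset U1),
            0 ≤ Fv init inobs trans obs g1 (k+1) ys u2s x u'' v :=
          fun u'' _ => Fv_nonneg init inobs trans obs hinit hinobs htrans hobs
            g1 hg1 (k+1) ys u2s x u'' v
        exact (Finset.sum_eq_zero_iff_of_nonneg h2).mp h1 u
          (Finset.mem_univ u)
      rw [hFvz, hA0, mul_zero]


lemma key_marg (g1' : Strat1 X U1 U2 Y) (hg1' : valid1 g1')
    (g2 : Strat2 U2 Y) (hg2 : valid2 g2) {T : ℕ} (t : Fin T)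
    (xt : X) (u1t : U1) (u2t : U2) (yh : Fin (t.1+1) → Y)
    (u2h : Fin t.1 → U2) :
    (∑ ω : Fin T → X × U1 × U2 × Y,
      if (ω t).1 = xt ∧ (ω t).2.1 = u1t ∧ (ω t).2.2.1 = u2t ∧
          ypre ω t = yh ∧ u2pre ω t = u2h then
        dens init inobs trans obs g1' g2 ω else 0)
    = g2C g2 t.1 yh u2h u2t *
        Fv init inobs trans obs g1' t.1 yh u2h xt u1t u2t := by
  have hA : ∀ ω : Fin T → X × U1 × U2 × Y,
      (if (ω t).1 = xt ∧ (ω t).2.1 = u1t ∧ (ω t).2.2.1 = u2t ∧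
          ypre ω t = yh ∧ u2pre ω t = u2h then
        dens init inobs trans obs g1' g2 ω else 0)
      = (fun σ : Fin (t.1+1) → X × U1 × U2 × Y =>
          if (σ (Fin.last t.1)).1 = xt ∧ (σ (Fin.last t.1)).2.1 = u1t ∧
              (σ (Fin.last t.1)).2.2.1 = u2t ∧
              ypre σ (Fin.last t.1) = yh ∧ u2pre σ (Fin.last t.1) = u2h then
            (1:ℝ) else 0) (fun i => ω (Fin.castLE t.isLt i)) *
          dens init inobs trans obs g1' g2 ω := by
    intro ω
    by_cases hc : ((ω t).1 = xt ∧ (ω t).2.1 = u1t ∧ (ω t).2.2.1 = u2t ∧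
        ypre ω t = yh ∧ u2pre ω t = u2h)
    · rw [if_pos hc]
      have h2 : (fun σ : Fin (t.1+1) → X × U1 × U2 × Y =>
          if (σ (Fin.last t.1)).1 = xt ∧ (σ (Fin.last t.1)).2.1 = u1t ∧
              (σ (Fin.last t.1)).2.2.1 = u2t ∧
              ypre σ (Fin.last t.1) = yh ∧ u2pre σ (Fin.last t.1) = u2h then
            (1:ℝ) else 0) (fun i => ω (Fin.castLE t.isLt i)) = 1 := if_pos hc
      rw [h2, one_mul]
    · rw [if_neg hc]
      have h2 : (fun σ : Fin (t.1+1) → X × U1 × U2 × Y =>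
          if (σ (Fin.last t.1)).1 = xt ∧ (σ (Fin.last t.1)).2.1 = u1t ∧
              (σ (Fin.last t.1)).2.2.1 = u2t ∧
              ypre σ (Fin.last t.1) = yh ∧ u2pre σ (Fin.last t.1) = u2h then
            (1:ℝ) else 0) (fun i => ω (Fin.castLE t.isLt i)) = 0 := if_neg hc
      rw [h2, zero_mul]
  rw [Finset.sum_congr rfl fun ω _ => hA ω]
  refine Eq.trans (marg init inobs trans obs hinit hinobs htrans hobs g1' hg1'
    g2 hg2 t.isLt (fun σ : Fin (t.1+1) → X × U1 × U2 × Y =>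
      if (σ (Fin.last t.1)).1 = xt ∧ (σ (Fin.last t.1)).2.1 = u1t ∧
          (σ (Fin.last t.1)).2.2.1 = u2t ∧
          ypre σ (Fin.last t.1) = yh ∧ u2pre σ (Fin.last t.1) = u2h then
        (1:ℝ) else 0)) ?_
  have hB : ∀ σ : Fin (t.1+1) → X × U1 × U2 × Y,
      (if (σ (Fin.last t.1)).1 = xt ∧ (σ (Fin.last t.1)).2.1 = u1t ∧
          (σ (Fin.last t.1)).2.2.1 = u2t ∧
          ypre σ (Fin.last t.1) = yh ∧ u2pre σ (Fin.last t.1) = u2h then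
        (1:ℝ) else 0) * dens init inobs trans obs g1' g2 σ
      = g2C g2 t.1 yh u2h u2t *
          (if (σ (Fin.last t.1)).1 = xt ∧ (σ (Fin.last t.1)).2.1 = u1t ∧
              (σ (Fin.last t.1)).2.2.1 = u2t ∧
              ypre σ (Fin.last t.1) = yh ∧ u2pre σ (Fin.last t.1) = u2h then
            dynP init inobs trans obs σ * g1P g1' σ else 0) := by
    intro σ
    by_cases hc : ((σ (Fin.last t.1)).1 = xt ∧ (σ (Fin.last t.1)).2.1 = u1t ∧
        (σ (Fin.last t.1)).2.2.1 = u2t ∧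
        ypre σ (Fin.last t.1) = yh ∧ u2pre σ (Fin.last t.1) = u2h)
    · rw [if_pos hc, if_pos hc, one_mul, dens_eq,
        g2P_cond g2 σ yh u2h u2t hc.2.2.2.1 hc.2.2.1 hc.2.2.2.2]
      ring
    · rw [if_neg hc, if_neg hc, zero_mul, mul_zero]
  refine Eq.trans (Finset.sum_congr rfl fun σ _ => hB σ) ?_
  rw [← Finset.mul_sum]
  rfl

end Aux4

/-- Lemma 6 of the paper: in the game where player 1 has complete information
and player 2 observes only `I^2_t = (Y^2_{0:t}, U^2_{0:t-1})`, for any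
behavioral strategy `g1` of player 1 there is a behavioral strategy `ḡ1`
depending at each time only on `(X_t, I^2_t)` such that for every valid
strategy `g2` of player 2, the joint distribution of
`(X_t, U^1_t, U^2_t, I^2_t)` is the same at every time under `(g1, g2)` and
`(ḡ1, g2)`; consequently the expected total cost is the same for every stage
cost function. -/
theorem stmt_16 {X U1 U2 Y : Type*}
    [Fintype X] [Fintype U1] [Fintype U2] [Fintype Y]
    [DecidableEq X] [DecidableEq U1] [DecidableEq U2] [DecidableEq Y]
    {T : ℕ}
    (init : X → ℝ) (inobs : X → Y → ℝ)
    (trans : X → U1 → U2 → X → ℝ) (obs : X → U1 → U2 → Y → ℝ)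
    (hinit : (∀ x, 0 ≤ init x) ∧ ∑ x, init x = 1)
    (hinobs : ∀ x, (∀ y, 0 ≤ inobs x y) ∧ ∑ y, inobs x y = 1)
    (htrans : ∀ x u1 u2, (∀ x', 0 ≤ trans x u1 u2 x') ∧
      ∑ x', trans x u1 u2 x' = 1)
    (hobs : ∀ x u1 u2, (∀ y, 0 ≤ obs x u1 u2 y) ∧ ∑ y, obs x u1 u2 y = 1)
    (g1 : Strat1 X U1 U2 Y) (hg1 : valid1 g1) :
    ∃ gbar : (t : ℕ) → X → (Fin (t + 1) → Y) → (Fin t → U2) → U1 → ℝ,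
      (∀ t x ys u2s, (∀ u, 0 ≤ gbar t x ys u2s u) ∧
        ∑ u, gbar t x ys u2s u = 1) ∧
      (∀ g2 : Strat2 U2 Y, valid2 g2 →
        ∀ t : Fin T, ∀ (xt : X) (u1t : U1) (u2t : U2)
          (yh : Fin (t.1 + 1) → Y) (u2h : Fin t.1 → U2),
          (∑ ω : Fin T → X × U1 × U2 × Y,
            if (ω t).1 = xt ∧ (ω t).2.1 = u1t ∧ (ω t).2.2.1 = u2t ∧
                ypre ω t = yh ∧ u2pre ω t = u2h then
              dens init inobs trans obs g1 g2 ω else 0) =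
          ∑ ω : Fin T → X × U1 × U2 × Y,
            if (ω t).1 = xt ∧ (ω t).2.1 = u1t ∧ (ω t).2.2.1 = u2t ∧
                ypre ω t = yh ∧ u2pre ω t = u2h then
              dens init inobs trans obs (embed1 gbar) g2 ω else 0) ∧
      (∀ g2 : Strat2 U2 Y, valid2 g2 →
        ∀ cst : Fin T → X → U1 → U2 → ℝ,
          (∑ ω : Fin T → X × U1 × U2 × Y,
            dens init inobs trans obs g1 g2 ω *
              ∑ t, cst t (ω t).1 (ω t).2.1 (ω t).2.2.1) =
          ∑ ω : Fin T → X × U1 × U2 × Y,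
            dens init inobs trans obs (embed1 gbar) g2 ω *
              ∑ t, cst t (ω t).1 (ω t).2.1 (ω t).2.2.1) := by
  have hval := gbar_valid init inobs trans obs hinit hinobs htrans hobs g1 hg1
  have hembed : valid1 (embed1 (gbarD init inobs trans obs g1)) := by
    intro t xs ys u1s u2s
    exact hval t (xs (Fin.last t)) ys u2s
  refine ⟨gbarD init inobs trans obs g1, fun t x ys u2s => hval t x ys u2s,
    ?_, ?_⟩
  · intro g2 hg2 t xt u1t u2t yh u2h
    rw [key_marg init inobs trans obs hinit hinobs htrans hobs g1 hg1 g2 hg2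
        t xt u1t u2t yh u2h,
      key_marg init inobs trans obs hinit hinobs htrans hobs
        (embed1 (gbarD init inobs trans obs g1)) hembed g2 hg2
        t xt u1t u2t yh u2h,
      Fv_bar_eq init inobs trans obs hinit hinobs htrans hobs g1 hg1
        t.1 yh u2h xt u1t u2t]
  · intro g2 hg2 cst
    classical
    have key2 : ∀ (g1'' : Strat1 X U1 U2 Y), valid1 g1'' →
        ∀ (t : Fin T) (b : X × U1 × U2 × (Fin (t.1+1) → Y) × (Fin t.1 → U2)),
        (∑ ω : Fin T → X × U1 × U2 × Y,
          if (ω t).1 = b.1 ∧ (ω t).2.1 = b.2.1 ∧ (ω t).2.2.1 = b.2.2.1 ∧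
              ypre ω t = b.2.2.2.1 ∧ u2pre ω t = b.2.2.2.2 then
            dens init inobs trans obs g1'' g2 ω else 0)
        = g2C g2 t.1 b.2.2.2.1 b.2.2.2.2 b.2.2.1 *
            Fv init inobs trans obs g1'' t.1 b.2.2.2.1 b.2.2.2.2 b.1 b.2.1
              b.2.2.1 :=
      fun g1'' hg1'' t b => key_marg init inobs trans obs hinit hinobs htrans
        hobs g1'' hg1'' g2 hg2 t b.1 b.2.1 b.2.2.1 b.2.2.2.1 b.2.2.2.2
    have hswap : ∀ g1'' : Strat1 X U1 U2 Y,
        (∑ ω : Fin T → X × U1 × U2 × Y,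
          dens init inobs trans obs g1'' g2 ω *
            ∑ t, cst t (ω t).1 (ω t).2.1 (ω t).2.2.1)
        = ∑ t : Fin T,
            ∑ b : X × U1 × U2 × (Fin (t.1+1) → Y) × (Fin t.1 → U2),
            (∑ ω : Fin T → X × U1 × U2 × Y,
              if (ω t).1 = b.1 ∧ (ω t).2.1 = b.2.1 ∧ (ω t).2.2.1 = b.2.2.1 ∧
                  ypre ω t = b.2.2.2.1 ∧ u2pre ω t = b.2.2.2.2 then
                dens init inobs trans obs g1'' g2 ω else 0) *
              cst t b.1 b.2.1 b.2.2.1 := by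
      intro g1''
      calc (∑ ω : Fin T → X × U1 × U2 × Y,
            dens init inobs trans obs g1'' g2 ω *
              ∑ t, cst t (ω t).1 (ω t).2.1 (ω t).2.2.1)
          = ∑ ω : Fin T → X × U1 × U2 × Y, ∑ t : Fin T,
              dens init inobs trans obs g1'' g2 ω *
                cst t (ω t).1 (ω t).2.1 (ω t).2.2.1 :=
            Finset.sum_congr rfl fun ω _ => by rw [Finset.mul_sum]
        _ = ∑ t : Fin T, ∑ ω : Fin T → X × U1 × U2 × Y,
              dens init inobs trans obs g1'' g2 ω *
                cst t (ω t).1 (ω t).2.1 (ω t).2.2.1 := Finset.sum_comm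
        _ = ∑ t : Fin T,
              ∑ b : X × U1 × U2 × (Fin (t.1+1) → Y) × (Fin t.1 → U2),
              (∑ ω : Fin T → X × U1 × U2 × Y,
                if ((ω t).1, (ω t).2.1, (ω t).2.2.1, ypre ω t, u2pre ω t)
                    = b then
                  dens init inobs trans obs g1'' g2 ω else 0) *
                cst t b.1 b.2.1 b.2.2.1 :=
            Finset.sum_congr rfl fun t _ => by
              have h := sum_fiber
                (fun ω : Fin T → X × U1 × U2 × Y =>
                  ((ω t).1, (ω t).2.1, (ω t).2.2.1, ypre ω t, u2pre ω t))
                (fun ω => dens init inobs trans obs g1'' g2 ω)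
                (fun b => cst t b.1 b.2.1 b.2.2.1)
              convert h using 4
              congr 1
        _ = ∑ t : Fin T,
              ∑ b : X × U1 × U2 × (Fin (t.1+1) → Y) × (Fin t.1 → U2),
              (∑ ω : Fin T → X × U1 × U2 × Y,
                if (ω t).1 = b.1 ∧ (ω t).2.1 = b.2.1 ∧ (ω t).2.2.1 = b.2.2.1 ∧
                    ypre ω t = b.2.2.2.1 ∧ u2pre ω t = b.2.2.2.2 then
                  dens init inobs trans obs g1'' g2 ω else 0) *
                cst t b.1 b.2.1 b.2.2.1 :=
            Finset.sum_congr rfl fun t _ => Finset.sum_congr rfl fun b _ => by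
              congr 1
              refine Finset.sum_congr rfl fun ω _ => ?_
              refine if_congr ?_ rfl rfl
              simp [Prod.ext_iff]
    rw [hswap g1, hswap (embed1 (gbarD init inobs trans obs g1))]
    refine Finset.sum_congr rfl fun t _ => Finset.sum_congr rfl fun b _ => ?_
    rw [key2 g1 hg1 t b, key2 _ hembed t b,
      Fv_bar_eq init inobs trans obs hinit hinobs htrans hobs g1 hg1
        t.1 b.2.2.2.1 b.2.2.2.2 b.1 b.2.1 b.2.2.1]
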